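/- Let (Y, Tₙ) → (Y, T) in total variation, where Tₙ, T are random variables with values in [0,1] and Y ∈ {0,1}. Define Δₙ = |E_{Tₙ}[|E[Y | Tₙ = t] − t|] − E_T[|E[Y | T = t] − t|]|. Then lim_{n→∞} Δₙ = 0. -/

import Mathlib

open MeasureTheory Filter Set Topology

/-- Total variation distance between two measures. -/
noncomputable def tvDist {α : Type*} [MeasurableSpace α] (μ ν : Measure α) : ℝ :=
  ⨆ s : {s : Set α // MeasurableSet s}, |(μ s.1).toReal - (ν s.1).toReal|

/-- For a joint law `ν` of a pair `(Y, T)`, the calibration functional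
`E_T[|E[Y | T = t] - t|]`, with the conditional expectation taken with respect to the
σ-algebra generated by the second coordinate. -/
noncomputable def calErr (ν : Measure (ℝ × ℝ)) : ℝ :=
  ∫ q, |(ν[(fun r : ℝ × ℝ => r.1) |
      MeasurableSpace.comap (Prod.snd : ℝ × ℝ → ℝ) Real.measurableSpace]) q - q.2| ∂ν

namespace Stmt12Aux

/-- abbreviation for the sub-σ-algebra generated by the second coordinate. -/
noncomputable def m2 : MeasurableSpace (ℝ × ℝ) :=
  MeasurableSpace.comap (Prod.snd : ℝ × ℝ → ℝ) Real.measurableSpace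

lemma hm2 : m2 ≤ (inferInstance : MeasurableSpace (ℝ × ℝ)) :=
  measurable_snd.comap_le

/-- the "linearized" calibration functional associated to a set. -/
noncomputable def calA (ρ : Measure (ℝ × ℝ)) (s : Set (ℝ × ℝ)) : ℝ :=
  (∫ q in s, q.1 ∂ρ - ∫ q in s, q.2 ∂ρ) - (∫ q in sᶜ, q.1 ∂ρ - ∫ q in sᶜ, q.2 ∂ρ)

lemma toReal_prob_le_one (μ : Measure (ℝ × ℝ)) [IsProbabilityMeasure μ] (s : Set (ℝ × ℝ)) :
    (μ s).toReal ≤ 1 := by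
  have h : μ s ≤ 1 := prob_le_one
  exact ENNReal.toReal_le_of_le_ofReal one_pos.le (by simpa using h)

lemma abs_apply_le_tvDist (μ ν : Measure (ℝ × ℝ)) [IsProbabilityMeasure μ]
    [IsProbabilityMeasure ν] {s : Set (ℝ × ℝ)} (hs : MeasurableSet s) :
    |(μ s).toReal - (ν s).toReal| ≤ tvDist μ ν := by
  have hb : BddAbove (Set.range fun t : {s : Set (ℝ × ℝ) // MeasurableSet s} =>
      |(μ t.1).toReal - (ν t.1).toReal|) := by
    refine ⟨2, ?_⟩
    rintro x ⟨⟨t, ht⟩, rfl⟩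
    have h1 := toReal_prob_le_one μ t
    have h2 := toReal_prob_le_one ν t
    have h3 : (0:ℝ) ≤ (μ t).toReal := ENNReal.toReal_nonneg
    have h4 : (0:ℝ) ≤ (ν t).toReal := ENNReal.toReal_nonneg
    rw [abs_sub_le_iff]
    constructor <;> linarith
  exact le_ciSup hb ⟨s, hs⟩

lemma tvDist_comm (μ ν : Measure (ℝ × ℝ)) : tvDist μ ν = tvDist ν μ := by
  unfold tvDist
  exact iSup_congr fun s => abs_sub_comm _ _

lemma integrable_fst (ρ : Measure (ℝ × ℝ)) [IsProbabilityMeasure ρ]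
    (hY : ∀ᵐ q ∂ρ, q.1 = 0 ∨ q.1 = 1) : Integrable (fun q : ℝ × ℝ => q.1) ρ := by
  refine Integrable.mono' (integrable_const 1) measurable_fst.aestronglyMeasurable ?_
  filter_upwards [hY] with q hq
  rcases hq with h | h <;> simp [h]

lemma integrable_snd (ρ : Measure (ℝ × ℝ)) [IsProbabilityMeasure ρ]
    (hT : ∀ᵐ q ∂ρ, q.2 ∈ Set.Icc (0 : ℝ) 1) : Integrable (fun q : ℝ × ℝ => q.2) ρ := by
  refine Integrable.mono' (integrable_const 1) measurable_snd.aestronglyMeasurable ?_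
  filter_upwards [hT] with q hq
  rw [Real.norm_eq_abs, abs_le]
  exact ⟨by linarith [hq.1], hq.2⟩

section CalAg

variable (ρ : Measure (ℝ × ℝ)) [IsProbabilityMeasure ρ]

/-- The conditional-expectation integrand. -/
noncomputable def gfun (ρ : Measure (ℝ × ℝ)) : ℝ × ℝ → ℝ :=
  fun q => (ρ[(fun r : ℝ × ℝ => r.1) | m2]) q - q.2

lemma calErr_eq_integral_abs_g : calErr ρ = ∫ q, |gfun ρ q| ∂ρ := rfl

lemma integrable_g (hY : ∀ᵐ q ∂ρ, q.1 = 0 ∨ q.1 = 1)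
    (hT : ∀ᵐ q ∂ρ, q.2 ∈ Set.Icc (0 : ℝ) 1) : Integrable (gfun ρ) ρ :=
  integrable_condExp.sub (integrable_snd ρ hT)

lemma measurable_g : Measurable[m2] (gfun ρ) := by
  have h1 : Measurable[m2] (ρ[(fun r : ℝ × ℝ => r.1) | m2]) :=
    stronglyMeasurable_condExp.measurable
  have h2 : Measurable[m2] (fun q : ℝ × ℝ => q.2) := fun s hs => ⟨s, hs, rfl⟩
  exact h1.sub h2

lemma calA_eq_g (hY : ∀ᵐ q ∂ρ, q.1 = 0 ∨ q.1 = 1)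
    (hT : ∀ᵐ q ∂ρ, q.2 ∈ Set.Icc (0 : ℝ) 1) {t : Set (ℝ × ℝ)} (ht : MeasurableSet[m2] t) :
    calA ρ t = ∫ q in t, gfun ρ q ∂ρ - ∫ q in tᶜ, gfun ρ q ∂ρ := by
  have hfst := integrable_fst ρ hY
  have hsnd := integrable_snd ρ hT
  have h1 : ∫ q in t, (fun r : ℝ × ℝ => r.1) q ∂ρ
      = ∫ q in t, (ρ[(fun r : ℝ × ℝ => r.1) | m2]) q ∂ρ :=
    (setIntegral_condExp hm2 hfst ht).symm
  have h2 : ∫ q in tᶜ, (fun r : ℝ × ℝ => r.1) q ∂ρ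
      = ∫ q in tᶜ, (ρ[(fun r : ℝ × ℝ => r.1) | m2]) q ∂ρ :=
    (setIntegral_condExp hm2 hfst (MeasurableSet.compl ht)).symm
  have h3 : ∫ q in t, gfun ρ q ∂ρ
      = ∫ q in t, (ρ[(fun r : ℝ × ℝ => r.1) | m2]) q ∂ρ - ∫ q in t, q.2 ∂ρ :=
    integral_sub (integrable_condExp.integrableOn) (hsnd.integrableOn)
  have h4 : ∫ q in tᶜ, gfun ρ q ∂ρ
      = ∫ q in tᶜ, (ρ[(fun r : ℝ × ℝ => r.1) | m2]) q ∂ρ - ∫ q in tᶜ, q.2 ∂ρ :=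
    integral_sub (integrable_condExp.integrableOn) (hsnd.integrableOn)
  simp only [calA]
  rw [h3, h4, ← h1, ← h2]

lemma calA_le_calErr (hY : ∀ᵐ q ∂ρ, q.1 = 0 ∨ q.1 = 1)
    (hT : ∀ᵐ q ∂ρ, q.2 ∈ Set.Icc (0 : ℝ) 1) {t : Set (ℝ × ℝ)} (ht : MeasurableSet[m2] t) :
    calA ρ t ≤ calErr ρ := by
  have hg := integrable_g ρ hY hT
  have ht' : MeasurableSet t := hm2 t ht
  rw [calA_eq_g ρ hY hT ht, calErr_eq_integral_abs_g]
  have e1 : ∫ q in t, gfun ρ q ∂ρ ≤ ∫ q in t, |gfun ρ q| ∂ρ :=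
    integral_mono hg.integrableOn hg.abs.integrableOn fun q => le_abs_self _
  have e2 : -∫ q in tᶜ, gfun ρ q ∂ρ ≤ ∫ q in tᶜ, |gfun ρ q| ∂ρ := by
    rw [← integral_neg]
    exact integral_mono hg.neg.integrableOn hg.abs.integrableOn fun q => neg_le_abs _
  have e3 : ∫ q in t, |gfun ρ q| ∂ρ + ∫ q in tᶜ, |gfun ρ q| ∂ρ = ∫ q, |gfun ρ q| ∂ρ :=
    integral_add_compl ht' hg.abs
  linarith

lemma exists_calA_eq (hY : ∀ᵐ q ∂ρ, q.1 = 0 ∨ q.1 = 1)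
    (hT : ∀ᵐ q ∂ρ, q.2 ∈ Set.Icc (0 : ℝ) 1) :
    ∃ s : Set (ℝ × ℝ), MeasurableSet[m2] s ∧ calErr ρ = calA ρ s := by
  have hg := integrable_g ρ hY hT
  refine ⟨{q | 0 ≤ gfun ρ q}, ?_, ?_⟩
  · exact measurable_g ρ measurableSet_Ici
  · have hs : MeasurableSet[m2] {q : ℝ × ℝ | 0 ≤ gfun ρ q} :=
      measurable_g ρ measurableSet_Ici
    have hs' : MeasurableSet {q : ℝ × ℝ | 0 ≤ gfun ρ q} := hm2 _ hs
    rw [calA_eq_g ρ hY hT hs, calErr_eq_integral_abs_g]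
    rw [← integral_add_compl hs' hg.abs]
    have e1 : ∫ q in {q : ℝ × ℝ | 0 ≤ gfun ρ q}, |gfun ρ q| ∂ρ
        = ∫ q in {q : ℝ × ℝ | 0 ≤ gfun ρ q}, gfun ρ q ∂ρ :=
      setIntegral_congr_fun hs' fun q hq => abs_of_nonneg hq
    have e2 : ∫ q in {q : ℝ × ℝ | 0 ≤ gfun ρ q}ᶜ, |gfun ρ q| ∂ρ
        = ∫ q in {q : ℝ × ℝ | 0 ≤ gfun ρ q}ᶜ, -gfun ρ q ∂ρ := by
      refine setIntegral_congr_fun hs'.compl fun q hq => ?_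
      have : gfun ρ q < 0 := lt_of_not_ge hq
      rw [abs_of_neg this]
    rw [e1, e2, integral_neg]
    ring

end CalAg

lemma fst_diff_le (μ ν : Measure (ℝ × ℝ)) [IsProbabilityMeasure μ] [IsProbabilityMeasure ν]
    (hYμ : ∀ᵐ q ∂μ, q.1 = 0 ∨ q.1 = 1) (hYν : ∀ᵐ q ∂ν, q.1 = 0 ∨ q.1 = 1)
    {s : Set (ℝ × ℝ)} (hs : MeasurableSet s) :
    |∫ q in s, q.1 ∂μ - ∫ q in s, q.1 ∂ν| ≤ tvDist μ ν := by
  set A : Set (ℝ × ℝ) := (Prod.fst : ℝ × ℝ → ℝ) ⁻¹' {1} with hA_def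
  have hA : MeasurableSet A := measurable_fst (measurableSet_singleton 1)
  have key : ∀ (ρ : Measure (ℝ × ℝ)) [IsProbabilityMeasure ρ],
      (∀ᵐ q ∂ρ, q.1 = 0 ∨ q.1 = 1) → ∫ q in s, q.1 ∂ρ = (ρ (s ∩ A)).toReal := by
    intro ρ _ hY
    have h1 : ∫ q in s, q.1 ∂ρ = ∫ q in s, A.indicator (fun _ => (1:ℝ)) q ∂ρ := by
      refine setIntegral_congr_ae hs ?_
      filter_upwards [hY] with q hq _
      rcases hq with h | h
      · have : q ∉ A := by simp [hA_def, h]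
        simp [this, h]
      · have : q ∈ A := by simp [hA_def, h]
        simp [this, h]
    rw [h1, setIntegral_indicator hA, setIntegral_const]
    simp
    rfl
  rw [key μ hYμ, key ν hYν]
  exact abs_apply_le_tvDist μ ν (hs.inter hA)

lemma snd_diff_le (μ ν : Measure (ℝ × ℝ)) [IsProbabilityMeasure μ] [IsProbabilityMeasure ν]
    (hTμ : ∀ᵐ q ∂μ, q.2 ∈ Set.Icc (0 : ℝ) 1) (hTν : ∀ᵐ q ∂ν, q.2 ∈ Set.Icc (0 : ℝ) 1)
    {s : Set (ℝ × ℝ)} (hs : MeasurableSet s) :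
    |∫ q in s, q.2 ∂μ - ∫ q in s, q.2 ∂ν| ≤ tvDist μ ν := by
  have hmeas : ∀ t : ℝ, MeasurableSet {a : ℝ × ℝ | t < a.2} :=
    fun t => measurable_snd measurableSet_Ioi
  have key : ∀ (ρ : Measure (ℝ × ℝ)) [IsProbabilityMeasure ρ],
      (∀ᵐ q ∂ρ, q.2 ∈ Set.Icc (0 : ℝ) 1) →
      ∫ q in s, q.2 ∂ρ = ∫ t in Set.Ioc (0:ℝ) 1, (ρ ({a : ℝ × ℝ | t < a.2} ∩ s)).toReal := by
    intro ρ _ hT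
    have hint : IntegrableOn (fun q : ℝ × ℝ => q.2) s ρ := (integrable_snd ρ hT).integrableOn
    have hnn : 0 ≤ᵐ[ρ.restrict s] fun q : ℝ × ℝ => q.2 :=
      ae_restrict_of_ae (hT.mono fun q hq => hq.1)
    have h1 := Integrable.integral_eq_integral_meas_lt hint hnn
    have h2 : ∀ t : ℝ, (ρ.restrict s).real {a : ℝ × ℝ | t < a.2} = (ρ ({a : ℝ × ℝ | t < a.2} ∩ s)).toReal :=
      fun t => by rw [Measure.real, Measure.restrict_apply (hmeas t)]
    rw [h1]
    simp_rw [h2]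
    -- restrict Ioi 0 to Ioc 0 1
    have hzero : ∀ t : ℝ, 1 < t → (ρ ({a : ℝ × ℝ | t < a.2} ∩ s)).toReal = 0 := by
      intro t ht
      have : ρ ({a : ℝ × ℝ | t < a.2} ∩ s) = 0 := by
        refine measure_mono_null ?_ (ae_iff.1 hT)
        intro a ha
        have h1a : t < a.2 := ha.1
        simp only [Set.mem_setOf_eq, Set.mem_Icc, not_and_or, not_le]
        right; linarith
      simp [this]
    have hcong : ∫ t in Set.Ioi (0:ℝ), (ρ ({a : ℝ × ℝ | t < a.2} ∩ s)).toReal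
        = ∫ t in Set.Ioi (0:ℝ),
          (Set.Ioc (0:ℝ) 1).indicator (fun t => (ρ ({a : ℝ × ℝ | t < a.2} ∩ s)).toReal) t := by
      refine setIntegral_congr_fun measurableSet_Ioi fun t ht => ?_
      by_cases h : t ≤ 1
      · rw [Set.indicator_of_mem (Set.mem_Ioc.2 ⟨ht, h⟩)]
      · rw [Set.indicator_of_notMem (by simp [Set.mem_Ioc, h]), hzero t (lt_of_not_ge h)]
    rw [hcong, setIntegral_indicator measurableSet_Ioc]
    congr 1
    rw [Set.inter_eq_right.2 Set.Ioc_subset_Ioi_self]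
  rw [key μ hTμ, key ν hTν]
  -- now bound the difference of the two layer-cake integrals
  have hintF : ∀ (ρ : Measure (ℝ × ℝ)) [IsProbabilityMeasure ρ],
      IntegrableOn (fun t => (ρ ({a : ℝ × ℝ | t < a.2} ∩ s)).toReal) (Set.Ioc (0:ℝ) 1) := by
    intro ρ _
    have hmono : Antitone (fun t => ρ ({a : ℝ × ℝ | t < a.2} ∩ s)) := by
      intro t t' htt'
      exact measure_mono (Set.inter_subset_inter_left s (fun a ha => lt_of_le_of_lt htt' ha))
    have hF : Measurable (fun t => (ρ ({a : ℝ × ℝ | t < a.2} ∩ s)).toReal) :=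
      (hmono.measurable).ennreal_toReal
    refine Integrable.mono' (g := fun _ => (1:ℝ)) (integrableOn_const (by simp))
      hF.aestronglyMeasurable ?_
    filter_upwards with t
    rw [Real.norm_eq_abs, abs_of_nonneg ENNReal.toReal_nonneg]
    exact toReal_prob_le_one ρ _
  rw [← integral_sub (hintF μ) (hintF ν)]
  have hbound := norm_setIntegral_le_of_norm_le_const (μ := (volume : Measure ℝ))
    (s := Set.Ioc (0:ℝ) 1)
    (f := fun t => (μ ({a : ℝ × ℝ | t < a.2} ∩ s)).toReal - (ν ({a : ℝ × ℝ | t < a.2} ∩ s)).toReal)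
    (C := tvDist μ ν) (by simp)
    (fun t _ => by
      rw [Real.norm_eq_abs]
      exact abs_apply_le_tvDist μ ν ((hmeas t).inter hs))
  calc |∫ t in Set.Ioc (0:ℝ) 1, ((μ ({a : ℝ × ℝ | t < a.2} ∩ s)).toReal
          - (ν ({a : ℝ × ℝ | t < a.2} ∩ s)).toReal)|
      ≤ tvDist μ ν * ((volume : Measure ℝ) (Set.Ioc (0:ℝ) 1)).toReal := hbound
    _ = tvDist μ ν := by simp

lemma calErr_sub_le (μ ν : Measure (ℝ × ℝ)) [IsProbabilityMeasure μ] [IsProbabilityMeasure ν]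
    (hYμ : ∀ᵐ q ∂μ, q.1 = 0 ∨ q.1 = 1) (hYν : ∀ᵐ q ∂ν, q.1 = 0 ∨ q.1 = 1)
    (hTμ : ∀ᵐ q ∂μ, q.2 ∈ Set.Icc (0 : ℝ) 1) (hTν : ∀ᵐ q ∂ν, q.2 ∈ Set.Icc (0 : ℝ) 1) :
    calErr μ - calErr ν ≤ 4 * tvDist μ ν := by
  obtain ⟨s, hsm, heq⟩ := exists_calA_eq μ hYμ hTμ
  have hs : MeasurableSet s := hm2 s hsm
  have hle : calA ν s ≤ calErr ν := calA_le_calErr ν hYν hTν hsm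
  have b1 := abs_le.1 (fst_diff_le μ ν hYμ hYν hs)
  have b2 := abs_le.1 (snd_diff_le μ ν hTμ hTν hs)
  have b3 := abs_le.1 (fst_diff_le μ ν hYμ hYν hs.compl)
  have b4 := abs_le.1 (snd_diff_le μ ν hTμ hTν hs.compl)
  have hA : calA μ s - calA ν s ≤ 4 * tvDist μ ν := by
    simp only [calA] at *
    linarith [b1.1, b1.2, b2.1, b2.2, b3.1, b3.2, b4.1, b4.2]
  linarith [heq ▸ hA]

end Stmt12Aux

open Stmt12Aux in
/-- If `(Y, Tₙ) → (Y, T)` in total variation, with `Tₙ, T ∈ [0,1]` and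
`Y ∈ {0,1}`, then `Δₙ = |E_{Tₙ}[|E[Y|Tₙ=t]−t|] − E_T[|E[Y|T=t]−t|]| → 0`. -/
theorem stmt12 (νs : ℕ → Measure (ℝ × ℝ)) (ν : Measure (ℝ × ℝ))
    [∀ n, IsProbabilityMeasure (νs n)] [IsProbabilityMeasure ν]
    (hYn : ∀ n, ∀ᵐ q ∂(νs n), q.1 = 0 ∨ q.1 = 1) (hY : ∀ᵐ q ∂ν, q.1 = 0 ∨ q.1 = 1)
    (hTn : ∀ n, ∀ᵐ q ∂(νs n), q.2 ∈ Set.Icc (0 : ℝ) 1)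
    (hT : ∀ᵐ q ∂ν, q.2 ∈ Set.Icc (0 : ℝ) 1)
    (htv : Tendsto (fun n => tvDist (νs n) ν) atTop (𝓝 0)) :
    Tendsto (fun n => |calErr (νs n) - calErr ν|) atTop (𝓝 0) := by
  have key : ∀ n, |calErr (νs n) - calErr ν| ≤ 4 * tvDist (νs n) ν := by
    intro n
    have h1 := calErr_sub_le (νs n) ν (hYn n) hY (hTn n) hT
    have h2 := calErr_sub_le ν (νs n) hY (hYn n) hT (hTn n)
    rw [tvDist_comm] at h2
    rw [abs_le]
    constructor <;> linarith
  have h4 : Tendsto (fun n => 4 * tvDist (νs n) ν) atTop (𝓝 0) := by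
    simpa using htv.const_mul 4
  exact squeeze_zero (fun n => abs_nonneg _) key h4
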